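/- Let G be a finite abelian group with dual Ĝ. Two nonempty subsets S ⊆ G and T ⊆ Ĝ satisfy the pointwise formal duality condition (for every y ∈ Ĝ, |(1/|S|) ∑_{v ∈ S} y(v)|² = (1/|T|) · #{(w,w') ∈ T × T : y = w - w'}) if and only if they satisfy the functional formal duality condition (for every f : G → ℂ, (1/|S|^{3/2}) ∑_{v,v' ∈ S} f(v-v') = (1/|T|^{3/2}) ∑_{w,w' ∈ T} f̂(w-w'), where f̂(y) = (1/√|G|) ∑_{x ∈ G} f(x) y(-x)). -/

import Mathlib

open scoped Classical

/-- The Fourier transform of `f : G → ℂ`, as a function on the dual group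
`Ĝ = AddChar G ℂ`:  `f̂(y) = (1/√|G|) ∑_{x ∈ G} f(x) y(-x)`. -/
noncomputable def fourierTransform {G : Type*} [AddCommGroup G] [Fintype G]
    (f : G → ℂ) (y : AddChar G ℂ) : ℂ :=
  ((Real.sqrt (Fintype.card G) : ℂ))⁻¹ * ∑ x : G, f x * y (-x)

namespace FormalDualityAux

lemma regroup {β : Type*} [AddCommGroup β] [Fintype β]
    (T : Finset β) (g : β → ℂ) :
    ∑ w ∈ T, ∑ w' ∈ T, g (w - w') =
      ∑ y : β, (((T ×ˢ T).filter fun p => y = p.1 - p.2).card : ℂ) * g y := by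
  classical
  rw [← Finset.sum_product']
  calc ∑ p ∈ T ×ˢ T, g (p.1 - p.2)
      = ∑ p ∈ T ×ˢ T, ∑ y : β, if y = p.1 - p.2 then g y else 0 := by
        refine Finset.sum_congr rfl fun p _ => ?_
        have := Finset.sum_ite_eq' (Finset.univ : Finset β) (p.1 - p.2) g
        simp only [Finset.mem_univ, if_true] at this
        exact this.symm
    _ = ∑ y : β, ∑ p ∈ T ×ˢ T, if y = p.1 - p.2 then g y else 0 := Finset.sum_comm
    _ = ∑ y : β, (((T ×ˢ T).filter fun p => y = p.1 - p.2).card : ℂ) * g y := by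
        refine Finset.sum_congr rfl fun y _ => ?_
        rw [← Finset.sum_filter, Finset.sum_const, nsmul_eq_mul]

lemma charsum_mul_conj {G : Type*} [AddCommGroup G] [Fintype G] (S : Finset G)
    (y : AddChar G ℂ) :
    (∑ v ∈ S, y v) * (starRingEnd ℂ) (∑ v ∈ S, y v) = ∑ v ∈ S, ∑ v' ∈ S, y (v - v') := by
  rw [map_sum, Finset.sum_mul_sum]
  exact Finset.sum_congr rfl fun v _ => Finset.sum_congr rfl fun v' _ => by
    rw [← AddChar.map_neg_eq_conj, ← AddChar.map_add_eq_mul, ← sub_eq_add_neg]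

lemma diag_sum {β : Type*} [AddCommGroup β] (S : Finset β) (c : ℂ) :
    (∑ v ∈ S, ∑ v' ∈ S, if v - v' = 0 then c else 0) = S.card * c := by
  classical
  have h : ∀ v ∈ S, (∑ v' ∈ S, if v - v' = 0 then c else 0) = c := fun v hv => by
    simp_rw [sub_eq_zero]
    rw [Finset.sum_ite_eq, if_pos hv]
  rw [Finset.sum_congr rfl h, Finset.sum_const, nsmul_eq_mul]

lemma pointwise_iff {G : Type*} [AddCommGroup G] [Fintype G] (S : Finset G)
    (T : Finset (AddChar G ℂ)) (hS : S.Nonempty) (hT : T.Nonempty) (y : AddChar G ℂ) :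
    (‖(S.card : ℂ)⁻¹ * ∑ v ∈ S, y v‖ ^ 2 =
        (T.card : ℝ)⁻¹ * ((T ×ˢ T).filter fun p => y = p.1 - p.2).card) ↔
    (T.card : ℂ) * ∑ v ∈ S, ∑ v' ∈ S, y (v - v') =
      ((S.card : ℂ))^2 * (((T ×ˢ T).filter fun p => y = p.1 - p.2).card : ℂ) := by
  classical
  have hs : (S.card : ℂ) ≠ 0 := Nat.cast_ne_zero.2 hS.card_pos.ne'
  have ht : (T.card : ℂ) ≠ 0 := Nat.cast_ne_zero.2 hT.card_pos.ne'
  have h1 : ((‖(S.card : ℂ)⁻¹ * ∑ v ∈ S, y v‖ ^ 2 : ℝ) : ℂ)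
      = (((S.card:ℂ))^2)⁻¹ * ∑ v ∈ S, ∑ v' ∈ S, y (v - v') := by
    rw [Complex.sq_norm, ← Complex.mul_conj]
    have h2 : ((S.card : ℂ)⁻¹ * ∑ v ∈ S, y v) *
          (starRingEnd ℂ) ((S.card : ℂ)⁻¹ * ∑ v ∈ S, y v)
        = (((S.card:ℂ))^2)⁻¹ *
          ((∑ v ∈ S, y v) * (starRingEnd ℂ) (∑ v ∈ S, y v)) := by
      simp only [map_mul, map_inv₀, Complex.conj_natCast]
      ring
    rw [h2, charsum_mul_conj]
  rw [← Complex.ofReal_inj, h1, Complex.ofReal_mul, Complex.ofReal_inv, Complex.ofReal_natCast,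
    Complex.ofReal_natCast, inv_mul_eq_div, inv_mul_eq_div,
    div_eq_div_iff (pow_ne_zero 2 hs) ht]
  constructor <;> intro h <;> linear_combination h

lemma ft_char {G : Type*} [AddCommGroup G] [Fintype G] (y z : AddChar G ℂ) :
    fourierTransform (⇑y) z =
      ((Real.sqrt (Fintype.card G) : ℂ))⁻¹ * (if y = z then (Fintype.card G : ℂ) else 0) := by
  classical
  unfold fourierTransform
  congr 1
  calc ∑ x, y x * z (-x) = ∑ x, (y - z) x :=
        Finset.sum_congr rfl fun x _ => (AddChar.sub_apply y z x).symm
    _ = if y - z = 0 then (Fintype.card G : ℂ) else 0 := AddChar.sum_eq_ite _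
    _ = if y = z then (Fintype.card G : ℂ) else 0 := by simp [sub_eq_zero]

lemma ft_one {G : Type*} [AddCommGroup G] [Fintype G] (z : AddChar G ℂ) :
    fourierTransform (fun _ => (1:ℂ)) z =
      ((Real.sqrt (Fintype.card G) : ℂ))⁻¹ * (if z = 0 then (Fintype.card G : ℂ) else 0) := by
  classical
  unfold fourierTransform
  congr 1
  calc ∑ x : G, (1:ℂ) * z (-x) = ∑ x : G, (-z) x := by
        refine Finset.sum_congr rfl fun x _ => ?_
        rw [one_mul, AddChar.neg_apply]
    _ = if -z = 0 then (Fintype.card G : ℂ) else 0 := AddChar.sum_eq_ite _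
    _ = if z = 0 then (Fintype.card G : ℂ) else 0 := by simp [neg_eq_zero]

lemma char_expand {G : Type*} [AddCommGroup G] [Fintype G] (f : G → ℂ) (d : G) :
    ∑ ψ : AddChar G ℂ, ψ d * fourierTransform f ψ
      = ((Real.sqrt (Fintype.card G) : ℂ))⁻¹ * ((Fintype.card G : ℂ) * f d) := by
  classical
  have h0 : ∀ ψ : AddChar G ℂ, ψ d * fourierTransform f ψ
      = ((Real.sqrt (Fintype.card G) : ℂ))⁻¹ * ∑ x : G, f x * ψ (d - x) := by
    intro ψ
    show ψ d * (((Real.sqrt (Fintype.card G) : ℂ))⁻¹ * ∑ x : G, f x * ψ (-x)) = _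
    rw [mul_left_comm]
    congr 1
    rw [Finset.mul_sum]
    refine Finset.sum_congr rfl fun x _ => ?_
    rw [sub_eq_add_neg, AddChar.map_add_eq_mul]
    ring
  rw [Finset.sum_congr rfl fun ψ _ => h0 ψ, ← Finset.mul_sum]
  congr 1
  rw [Finset.sum_comm]
  calc ∑ x : G, ∑ ψ : AddChar G ℂ, f x * ψ (d - x)
      = ∑ x : G, f x * (if d - x = 0 then (Fintype.card G : ℂ) else 0) := by
        refine Finset.sum_congr rfl fun x _ => ?_
        rw [← Finset.mul_sum, AddChar.sum_apply_eq_ite]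
    _ = ∑ x : G, (if d = x then (Fintype.card G : ℂ) * f x else 0) := by
        refine Finset.sum_congr rfl fun x _ => ?_
        simp_rw [sub_eq_zero]
        split_ifs <;> ring
    _ = (Fintype.card G : ℂ) * f d := by
        rw [Finset.sum_ite_eq, if_pos (Finset.mem_univ d)]

end FormalDualityAux

open FormalDualityAux in
theorem stmt_2 {G : Type*} [AddCommGroup G] [Fintype G]
    (S : Finset G) (T : Finset (AddChar G ℂ))
    (hS : S.Nonempty) (hT : T.Nonempty) :
    (∀ y : AddChar G ℂ,
      ‖(S.card : ℂ)⁻¹ * ∑ v ∈ S, y v‖ ^ 2 =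
        (T.card : ℝ)⁻¹ * ((T ×ˢ T).filter fun p => y = p.1 - p.2).card) ↔
    (∀ f : G → ℂ,
      (((S.card : ℝ) ^ ((3 : ℝ) / 2) : ℝ) : ℂ)⁻¹ * ∑ v ∈ S, ∑ v' ∈ S, f (v - v') =
      (((T.card : ℝ) ^ ((3 : ℝ) / 2) : ℝ) : ℂ)⁻¹ *
        ∑ w ∈ T, ∑ w' ∈ T, fourierTransform f (w - w')) := by
  classical
  have hsC : (S.card : ℂ) ≠ 0 := Nat.cast_ne_zero.2 hS.card_pos.ne'
  have htC : (T.card : ℂ) ≠ 0 := Nat.cast_ne_zero.2 hT.card_pos.ne'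
  have hA0 : (0:ℝ) < Real.sqrt S.card :=
    Real.sqrt_pos.2 (by exact_mod_cast hS.card_pos)
  have hB0 : (0:ℝ) < Real.sqrt T.card :=
    Real.sqrt_pos.2 (by exact_mod_cast hT.card_pos)
  have hC0 : (0:ℝ) < Real.sqrt (Fintype.card G) :=
    Real.sqrt_pos.2 (by exact_mod_cast Fintype.card_pos)
  have hA : ((Real.sqrt S.card : ℝ) : ℂ) ≠ 0 := by exact_mod_cast hA0.ne'
  have hB : ((Real.sqrt T.card : ℝ) : ℂ) ≠ 0 := by exact_mod_cast hB0.ne'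
  have hC : ((Real.sqrt (Fintype.card G) : ℝ) : ℂ) ≠ 0 := by exact_mod_cast hC0.ne'
  have hsa : (S.card : ℂ) = ((Real.sqrt S.card : ℝ) : ℂ)^2 := by
    have h := Real.sq_sqrt (Nat.cast_nonneg (α := ℝ) S.card)
    exact_mod_cast h.symm
  have hta : (T.card : ℂ) = ((Real.sqrt T.card : ℝ) : ℂ)^2 := by
    have h := Real.sq_sqrt (Nat.cast_nonneg (α := ℝ) T.card)
    exact_mod_cast h.symm
  have hC2 : ((Real.sqrt (Fintype.card G) : ℝ) : ℂ)^2 = (Fintype.card G : ℂ) := by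
    have h := Real.sq_sqrt (Nat.cast_nonneg (α := ℝ) (Fintype.card G))
    exact_mod_cast h
  have h32 : ∀ m : ℕ, (((m:ℝ) ^ ((3:ℝ)/2) : ℝ) : ℂ) = ((Real.sqrt m : ℝ) : ℂ)^3 := by
    intro m
    have h : (m:ℝ) ^ ((3:ℝ)/2) = (Real.sqrt m)^3 := by
      rw [show ((3:ℝ)/2) = (1/2) * ((3:ℕ):ℝ) by norm_num,
        Real.rpow_mul (Nat.cast_nonneg _), Real.rpow_natCast, ← Real.sqrt_eq_rpow]
    rw [h]
    push_cast
    ring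
  constructor
  · -- pointwise ⇒ functional
    intro hP f
    have hPC : ∀ y : AddChar G ℂ,
        (T.card : ℂ) * ∑ v ∈ S, ∑ v' ∈ S, y (v - v') =
          ((S.card : ℂ))^2 * (((T ×ˢ T).filter fun p => y = p.1 - p.2).card : ℂ) :=
      fun y => (pointwise_iff S T hS hT y).1 (hP y)
    -- derive |S||T| = |G|
    have hsumP : ∑ ψ : AddChar G ℂ, ((T.card:ℂ) * ∑ v ∈ S, ∑ v' ∈ S, ψ (v - v'))
        = (T.card:ℂ) * ((S.card : ℂ) * (Fintype.card G : ℂ)) := by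
      rw [← Finset.mul_sum]
      congr 1
      calc ∑ ψ : AddChar G ℂ, ∑ v ∈ S, ∑ v' ∈ S, ψ (v - v')
          = ∑ v ∈ S, ∑ v' ∈ S, ∑ ψ : AddChar G ℂ, ψ (v - v') := by
            rw [Finset.sum_comm]
            exact Finset.sum_congr rfl fun v _ => Finset.sum_comm
        _ = ∑ v ∈ S, ∑ v' ∈ S, if v - v' = 0 then (Fintype.card G : ℂ) else 0 :=
            Finset.sum_congr rfl fun v _ => Finset.sum_congr rfl fun v' _ =>
              AddChar.sum_apply_eq_ite _
        _ = (S.card : ℂ) * (Fintype.card G : ℂ) := diag_sum S _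
    have hsumN : ∑ ψ : AddChar G ℂ,
          (((S.card:ℂ))^2 * (((T ×ˢ T).filter fun p => ψ = p.1 - p.2).card : ℂ))
        = ((S.card:ℂ))^2 * ((T.card:ℂ))^2 := by
      rw [← Finset.mul_sum]
      congr 1
      calc ∑ ψ : AddChar G ℂ, (((T ×ˢ T).filter fun p => ψ = p.1 - p.2).card : ℂ)
          = ∑ ψ : AddChar G ℂ, ∑ p ∈ T ×ˢ T, if ψ = p.1 - p.2 then (1:ℂ) else 0 := by
            refine Finset.sum_congr rfl fun ψ _ => ?_
            rw [← Finset.sum_filter, Finset.sum_const, nsmul_eq_mul, mul_one]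
        _ = ∑ p ∈ T ×ˢ T, ∑ ψ : AddChar G ℂ, if ψ = p.1 - p.2 then (1:ℂ) else 0 :=
            Finset.sum_comm
        _ = ∑ _p ∈ T ×ˢ T, (1:ℂ) := by
            refine Finset.sum_congr rfl fun p _ => ?_
            rw [Finset.sum_ite_eq' Finset.univ (p.1 - p.2) (fun _ => (1:ℂ)),
              if_pos (Finset.mem_univ _)]
        _ = ((T.card:ℂ))^2 := by
            rw [Finset.sum_const, nsmul_eq_mul, mul_one, Finset.card_product]
            push_cast
            ring
    have hstC : (Fintype.card G : ℂ) = (S.card : ℂ) * (T.card : ℂ) := by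
      have h : (T.card:ℂ) * ((S.card : ℂ) * (Fintype.card G : ℂ))
          = ((S.card:ℂ))^2 * ((T.card:ℂ))^2 := by
        rw [← hsumP, ← hsumN]
        exact Finset.sum_congr rfl fun ψ _ => hPC ψ
      apply mul_left_cancel₀ (mul_ne_zero htC hsC)
      linear_combination h
    have hstN : Fintype.card G = S.card * T.card := by
      have : ((Fintype.card G : ℕ) : ℂ) = ((S.card * T.card : ℕ) : ℂ) := by
        push_cast
        rw [hstC]
      exact_mod_cast this
    have hCab : ((Real.sqrt (Fintype.card G) : ℝ) : ℂ)
        = ((Real.sqrt S.card : ℝ) : ℂ) * ((Real.sqrt T.card : ℝ) : ℂ) := by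
      have h : Real.sqrt (Fintype.card G) = Real.sqrt S.card * Real.sqrt T.card := by
        rw [hstN, Nat.cast_mul, Real.sqrt_mul (Nat.cast_nonneg _)]
      exact_mod_cast h
    have hnC : (Fintype.card G : ℂ)
        = (((Real.sqrt S.card : ℝ) : ℂ) * ((Real.sqrt T.card : ℝ) : ℂ))^2 := by
      rw [hstC, hsa, hta]
      ring
    -- main computation
    have hBkey : ((S.card:ℂ))^2 * (∑ w ∈ T, ∑ w' ∈ T, fourierTransform f (w - w'))
        = (T.card:ℂ) * (((Real.sqrt (Fintype.card G) : ℝ) : ℂ))⁻¹ *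
            ((Fintype.card G : ℂ) * ∑ v ∈ S, ∑ v' ∈ S, f (v - v')) := by
      rw [regroup T (fourierTransform f), Finset.mul_sum]
      have step : ∀ ψ : AddChar G ℂ,
          ((S.card:ℂ))^2 * ((((T ×ˢ T).filter fun p => ψ = p.1 - p.2).card : ℂ) *
            fourierTransform f ψ)
          = (T.card:ℂ) * ((∑ v ∈ S, ∑ v' ∈ S, ψ (v - v')) * fourierTransform f ψ) :=
        fun ψ => by linear_combination fourierTransform f ψ * (hPC ψ).symm
      rw [Finset.sum_congr rfl fun ψ _ => step ψ, ← Finset.mul_sum, mul_assoc]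
      congr 1
      calc ∑ ψ : AddChar G ℂ, (∑ v ∈ S, ∑ v' ∈ S, ψ (v - v')) * fourierTransform f ψ
          = ∑ ψ : AddChar G ℂ, ∑ v ∈ S, ∑ v' ∈ S, ψ (v - v') * fourierTransform f ψ := by
            refine Finset.sum_congr rfl fun ψ _ => ?_
            rw [Finset.sum_mul]
            exact Finset.sum_congr rfl fun v _ => Finset.sum_mul _ _ _
        _ = ∑ v ∈ S, ∑ v' ∈ S, ∑ ψ : AddChar G ℂ, ψ (v - v') * fourierTransform f ψ := by
            rw [Finset.sum_comm]
            exact Finset.sum_congr rfl fun v _ => Finset.sum_comm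
        _ = ∑ v ∈ S, ∑ v' ∈ S, ((Real.sqrt (Fintype.card G) : ℂ))⁻¹ *
              ((Fintype.card G : ℂ) * f (v - v')) :=
            Finset.sum_congr rfl fun v _ => Finset.sum_congr rfl fun v' _ =>
              char_expand f _
        _ = (((Real.sqrt (Fintype.card G) : ℝ) : ℂ))⁻¹ *
              ((Fintype.card G : ℂ) * ∑ v ∈ S, ∑ v' ∈ S, f (v - v')) := by
            simp_rw [Finset.mul_sum]
    rw [h32 S.card, h32 T.card]
    rw [hsa, hta, hCab, hnC] at hBkey
    rw [inv_mul_eq_div, inv_mul_eq_div,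
      div_eq_div_iff (pow_ne_zero 3 hA) (pow_ne_zero 3 hB)]
    apply mul_left_cancel₀ (show ((Real.sqrt S.card : ℝ) : ℂ)^2 * ((Real.sqrt T.card : ℝ) : ℂ) ≠ 0
      from mul_ne_zero (pow_ne_zero 2 hA) hB)
    field_simp at hBkey
    linear_combination (-(((Real.sqrt S.card : ℝ) : ℂ)^2 * ((Real.sqrt T.card : ℝ) : ℂ))) * hBkey
  · -- functional ⇒ pointwise
    intro hF y
    -- apply to constant function 1 to get |S||T| = |G|
    have h1 := hF (fun _ => (1:ℂ))
    have hL1 : ∑ v ∈ S, ∑ v' ∈ S, (1:ℂ) = ((S.card:ℂ))^2 := by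
      simp [Finset.sum_const]
      ring
    have hR1 : ∑ w ∈ T, ∑ w' ∈ T, fourierTransform (fun _ => (1:ℂ)) (w - w')
        = (((Real.sqrt (Fintype.card G) : ℝ) : ℂ))⁻¹ *
            ((T.card : ℂ) * (Fintype.card G : ℂ)) := by
      rw [Finset.sum_congr rfl fun w _ => Finset.sum_congr rfl fun w' _ => ft_one _]
      simp_rw [← Finset.mul_sum]
      rw [diag_sum T]
    rw [hL1, hR1, h32 S.card, h32 T.card, hsa, hta, ← hC2] at h1
    have hCab : ((Real.sqrt (Fintype.card G) : ℝ) : ℂ)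
        = ((Real.sqrt S.card : ℝ) : ℂ) * ((Real.sqrt T.card : ℝ) : ℂ) := by
      field_simp at h1
      apply mul_left_cancel₀ (show ((Real.sqrt S.card : ℝ) : ℂ)^3 * ((Real.sqrt T.card : ℝ) : ℂ)^2 *
          ((Real.sqrt (Fintype.card G) : ℝ) : ℂ) ≠ 0
        from mul_ne_zero (mul_ne_zero (pow_ne_zero 3 hA) (pow_ne_zero 2 hB)) hC)
      linear_combination (-(((Real.sqrt S.card : ℝ) : ℂ)^3 * ((Real.sqrt T.card : ℝ) : ℂ)^2 *
          ((Real.sqrt (Fintype.card G) : ℝ) : ℂ))) * h1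
    -- now apply to the character y
    rw [pointwise_iff S T hS hT y]
    have h2 := hF (⇑y)
    have hR2 : ∑ w ∈ T, ∑ w' ∈ T, fourierTransform (⇑y) (w - w')
        = (((Real.sqrt (Fintype.card G) : ℝ) : ℂ))⁻¹ * ((Fintype.card G : ℂ) *
            (((T ×ˢ T).filter fun p => y = p.1 - p.2).card : ℂ)) := by
      rw [Finset.sum_congr rfl fun w _ => Finset.sum_congr rfl fun w' _ => ft_char y _]
      simp_rw [← Finset.mul_sum]
      congr 1
      calc ∑ w ∈ T, ∑ w' ∈ T, (if y = w - w' then (Fintype.card G : ℂ) else 0)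
          = ∑ p ∈ T ×ˢ T, (if y = p.1 - p.2 then (Fintype.card G : ℂ) else 0) := by
            rw [Finset.sum_product]
        _ = ∑ _p ∈ (T ×ˢ T).filter (fun p => y = p.1 - p.2), (Fintype.card G : ℂ) :=
            (Finset.sum_filter _ _).symm
        _ = (Fintype.card G : ℂ) *
              (((T ×ˢ T).filter fun p => y = p.1 - p.2).card : ℂ) := by
            rw [Finset.sum_const, nsmul_eq_mul]
            ring
    rw [hR2, h32 S.card, h32 T.card, ← hC2, hCab] at h2
    rw [hsa, hta]
    field_simp at h2
    apply mul_left_cancel₀ (show ((Real.sqrt S.card : ℝ) : ℂ) * ((Real.sqrt T.card : ℝ) : ℂ)^2 ≠ 0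
      from mul_ne_zero hA (pow_ne_zero 2 hB))
    linear_combination (((Real.sqrt S.card : ℝ) : ℂ) * ((Real.sqrt T.card : ℝ) : ℂ)^2) * h2
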